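/- In the smart grid example with I-type approximating games where type i ∈ {1,…,I} has weight 1/I, action set X_i = {(x_O,x_P) ∈ R²₊ : x_O + x_P = (i/I)·N·E_max} and the same linear price cost, the symmetric equilibrium aggregate is X̂^I = (1 + 1/I)·X*, where X* is the aggregate equilibrium of the continuum game; hence ‖X̂^I − X*‖ = ‖X*‖/I = (√(a_O²+a_P²)/(a_O+a_P))·E_tot/I. -/

import Mathlib

open Metric MeasureTheory

/-- smart grid example, finite-type approximation: in the `I`-type
approximating game, the aggregate set is
`S_I = {(X_O,X_P) ∈ ℝ²₊ : X_O + X_P = E_tot(1 + 1/I)}` and the symmetric equilibrium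
aggregate (unique solution of the VI over `S_I`) is `X̂^I = (1 + 1/I)·X*`; hence
`‖X̂^I - X*‖ = ‖X*‖/I = (√(a_O² + a_P²)/(a_O + a_P))·E_tot/I`. -/
theorem smart_grid_finite_approximation {N Emax aO aP : ℝ} {I : ℕ}
    (hI : 0 < I) (hN : 0 < N) (hE : 0 < Emax) (haO : 0 < aO) (haOP : aO < aP) :
    (∀ Z : EuclideanSpace ℝ (Fin 2),
      ((0 ≤ Z 0 ∧ 0 ≤ Z 1 ∧ Z 0 + Z 1 = (N * Emax / 2) * (1 + 1 / (I:ℝ))) ∧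
        ∀ X : EuclideanSpace ℝ (Fin 2),
          (0 ≤ X 0 ∧ 0 ≤ X 1 ∧ X 0 + X 1 = (N * Emax / 2) * (1 + 1 / (I:ℝ))) →
          0 ≤ aO / N * Z 0 * (X 0 - Z 0) + aP / N * Z 1 * (X 1 - Z 1))
      ↔ (Z 0 = (1 + 1 / (I:ℝ)) * (aP * (N * Emax / 2) / (aO + aP)) ∧
         Z 1 = (1 + 1 / (I:ℝ)) * (aO * (N * Emax / 2) / (aO + aP))))
    ∧ ∀ Z : EuclideanSpace ℝ (Fin 2),
        (Z 0 = (1 + 1 / (I:ℝ)) * (aP * (N * Emax / 2) / (aO + aP)) ∧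
         Z 1 = (1 + 1 / (I:ℝ)) * (aO * (N * Emax / 2) / (aO + aP))) →
        Real.sqrt ((Z 0 - aP * (N * Emax / 2) / (aO + aP)) ^ 2 +
            (Z 1 - aO * (N * Emax / 2) / (aO + aP)) ^ 2)
          = Real.sqrt ((aP * (N * Emax / 2) / (aO + aP)) ^ 2 +
              (aO * (N * Emax / 2) / (aO + aP)) ^ 2) / (I:ℝ)
        ∧ Real.sqrt ((aP * (N * Emax / 2) / (aO + aP)) ^ 2 +
              (aO * (N * Emax / 2) / (aO + aP)) ^ 2) / (I:ℝ)
          = Real.sqrt (aO ^ 2 + aP ^ 2) / (aO + aP) * (N * Emax / 2) / (I:ℝ) := by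
  have hIpos : (0:ℝ) < (I:ℝ) := by exact_mod_cast hI
  have hIne : (I:ℝ) ≠ 0 := ne_of_gt hIpos
  have hNne : N ≠ 0 := ne_of_gt hN
  have haP : (0:ℝ) < aP := lt_trans haO haOP
  have hs : (0:ℝ) < aO + aP := by linarith
  have hsne : aO + aP ≠ 0 := ne_of_gt hs
  set c : ℝ := (1 + 1 / (I:ℝ)) with hc
  have hcpos : 0 < c := by
    have h1I : 0 < 1 / (I:ℝ) := by positivity
    simp only [hc]; linarith
  set E : ℝ := N * Emax / 2 with hEdef
  have hEpos : 0 < E := by positivity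
  have hcE : 0 < E * c := by positivity
  constructor
  · intro Z
    constructor
    · rintro ⟨⟨h0, h1, hsum⟩, hVI⟩
      have hV1 := hVI (WithLp.toLp 2 ![E * c, 0]) ⟨le_of_lt hcE, le_refl 0, by simp⟩
      have hV2 := hVI (WithLp.toLp 2 ![0, E * c]) ⟨le_refl 0, le_of_lt hcE, by simp⟩
      simp only [WithLp.ofLp_toLp, Matrix.cons_val_zero, Matrix.cons_val_one, Matrix.head_cons] at hV1 hV2
      have hA : 0 ≤ (aO * Z 0 - aP * Z 1) * Z 1 := by
        have h := mul_nonneg (le_of_lt hN) hV1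
        have e : N * (aO / N * Z 0 * (E * c - Z 0) + aP / N * Z 1 * (0 - Z 1))
            = (aO * Z 0 - aP * Z 1) * Z 1 := by
          field_simp
          linear_combination (-(aO * Z 0)) * hsum
        linarith [e ▸ h]
      have hB : (aO * Z 0 - aP * Z 1) * Z 0 ≤ 0 := by
        have h := mul_nonneg (le_of_lt hN) hV2
        have e : N * (aO / N * Z 0 * (0 - Z 0) + aP / N * Z 1 * (E * c - Z 1))
            = -((aO * Z 0 - aP * Z 1) * Z 0) := by
          field_simp
          linear_combination (-(aP * Z 1)) * hsum
        linarith [e ▸ h]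
      have hD : aO * Z 0 = aP * Z 1 := by
        rcases lt_trichotomy (aO * Z 0 - aP * Z 1) 0 with h | h | h
        · exfalso
          have hZ1 : Z 1 ≤ 0 := by nlinarith [hA]
          have hZ10 : Z 1 = 0 := le_antisymm hZ1 h1
          have hZ0c : Z 0 = E * c := by rw [hZ10] at hsum; linarith
          nlinarith [mul_pos haO hcE]
        · linarith
        · exfalso
          have hZ0 : Z 0 ≤ 0 := by nlinarith [hB]
          have hZ00 : Z 0 = 0 := le_antisymm hZ0 h0
          have hZ1c : Z 1 = E * c := by rw [hZ00] at hsum; linarith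
          nlinarith [mul_pos haP hcE]
      constructor
      · rw [← mul_div_assoc, eq_div_iff hsne]
        linear_combination hD + aP * hsum
      · rw [← mul_div_assoc, eq_div_iff hsne]
        linear_combination aO * hsum - hD
    · rintro ⟨h0, h1⟩
      have hZ0pos : 0 ≤ Z 0 := by rw [h0]; positivity
      have hZ1pos : 0 ≤ Z 1 := by rw [h1]; positivity
      have hZsum : Z 0 + Z 1 = E * c := by
        rw [h0, h1]; field_simp; ring
      refine ⟨⟨hZ0pos, hZ1pos, hZsum⟩, ?_⟩
      intro X ⟨hx0, hx1, hxsum⟩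
      have e1 : aP * Z 1 = aO * Z 0 := by rw [h0, h1]; field_simp
      have key : aO / N * Z 0 * (X 0 - Z 0) + aP / N * Z 1 * (X 1 - Z 1)
          = aO / N * Z 0 * ((X 0 + X 1) - (Z 0 + Z 1)) := by
        linear_combination ((X 1 - Z 1) / N) * e1
      rw [key, hxsum, hZsum, sub_self, mul_zero]
  · rintro Z ⟨h0, h1⟩
    rw [h0, h1, hc]
    constructor
    · have h : ((1 + 1/(I:ℝ)) * (aP * E / (aO + aP)) - aP * E / (aO + aP)) ^ 2 +
          ((1 + 1/(I:ℝ)) * (aO * E / (aO + aP)) - aO * E / (aO + aP)) ^ 2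
          = ((aP * E / (aO + aP)) ^ 2 + (aO * E / (aO + aP)) ^ 2) / (I:ℝ) ^ 2 := by
        ring
      rw [h, Real.sqrt_div (by positivity), Real.sqrt_sq hIpos.le]
    · have h : (aP * E / (aO + aP)) ^ 2 + (aO * E / (aO + aP)) ^ 2
          = (aO ^ 2 + aP ^ 2) * (E / (aO + aP)) ^ 2 := by ring
      rw [h, Real.sqrt_mul (by positivity), Real.sqrt_sq (by positivity)]
      ring
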